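/- If u ∈ C⁰(Σ) is a sub-action for a continuous potential A, then a holonomic probability μ̂ is A-maximizing if and only if its support is contained in the contact locus M_A(u) = {(y,x) ∈ Σ̂ : A(y,x) + u(x) − u(τ_y(x)) = β_A}. -/

import Mathlib

open MeasureTheory

section AubryMather

variable {r : ℕ} {M : Fin r → Fin r → Bool}

/-- One-sided subshift of finite type on `r` symbols with transition matrix `M`. -/
abbrev SigSp (r : ℕ) (M : Fin r → Fin r → Bool) :=
  {x : ℕ → Fin r // ∀ j, M (x j) (x (j + 1)) = true}

/-- The dual subshift, with transposed transition matrix (coordinates `(…, y₁, y₀)`). -/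
abbrev DualSp (r : ℕ) (M : Fin r → Fin r → Bool) :=
  {y : ℕ → Fin r // ∀ j, M (y (j + 1)) (y j) = true}

/-- The natural extension `Σ̂ ⊂ Σ* × Σ`: pairs `(y,x)` with `M (y₀, x₀) = 1`. -/
abbrev NatExt (r : ℕ) (M : Fin r → Fin r → Bool) :=
  {p : DualSp r M × SigSp r M // M (p.1.1 0) (p.2.1 0) = true}

/-- Prepend a symbol to a sequence. -/
def prepend (a : Fin r) (x : ℕ → Fin r) : ℕ → Fin r
  | 0 => a
  | m + 1 => x m

/-- The left shift `σ` on `Σ`. -/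
def shiftS (x : SigSp r M) : SigSp r M := ⟨fun n => x.1 (n + 1), fun j => x.2 (j + 1)⟩

/-- The projection `π₁(y,x) = x`. -/
def proj1 (p : NatExt r M) : SigSp r M := p.1.2

/-- `τ(y,x) = τ_y(x) = (y₀, x₀, x₁, …)`. -/
def tau (p : NatExt r M) : SigSp r M :=
  ⟨prepend (p.1.1.1 0) p.1.2.1, by
    intro j
    cases j with
    | zero => exact p.2
    | succ m => exact p.1.2.2 m⟩

/-- The two-sided shift `σ̂` on the natural extension. -/
def hatShift (p : NatExt r M) : NatExt r M :=
  ⟨(⟨prepend (p.1.2.1 0) p.1.1.1, by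
      intro j
      cases j with
      | zero => exact p.2
      | succ m => exact p.1.1.2 m⟩, shiftS p.1.2), p.1.2.2 0⟩

/-- Holonomic probability measures on `Σ̂`. -/
def Holonomic (μ : Measure (NatExt r M)) : Prop :=
  IsProbabilityMeasure μ ∧
    ∀ f : C(SigSp r M, ℝ), (∫ p, f (tau p) ∂μ) = ∫ p, f (proj1 p) ∂μ

/-- `β_A`, the maximal holonomic value of the potential `A`. -/
noncomputable def betaA (A : NatExt r M → ℝ) : ℝ :=
  ⨆ μ : {μ : Measure (NatExt r M) // Holonomic μ}, ∫ p, A p ∂(μ.1)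

open Classical in
/-- The metric `d(x, x̄) = λ^{min {j : x_j ≠ x̄_j}}` on `Σ`. -/
noncomputable def dS (lam : ℝ) (x x' : SigSp r M) : ℝ :=
  if h : x.1 = x'.1 then 0
  else lam ^ Nat.find (show ∃ j, x.1 j ≠ x'.1 j from Function.ne_iff.mp h)

open Classical in
/-- The analogous metric on `Σ*`. -/
noncomputable def dDual (lam : ℝ) (y y' : DualSp r M) : ℝ :=
  if h : y.1 = y'.1 then 0
  else lam ^ Nat.find (show ∃ j, y.1 j ≠ y'.1 j from Function.ne_iff.mp h)

/-- The metric on `Σ̂ ⊂ Σ* × Σ`. -/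
noncomputable def dHat (lam : ℝ) (p q : NatExt r M) : ℝ :=
  max (dDual lam p.1.1 q.1.1) (dS lam p.1.2 q.1.2)

/-- `u` is `θ`-Hölder on `Σ` with constant `C`. -/
def HolderOnSig (lam θ C : ℝ) (u : SigSp r M → ℝ) : Prop :=
  ∀ x x', |u x - u x'| ≤ C * (dS lam x x') ^ θ

/-- `A` is `θ`-Hölder on `Σ̂` with constant `C`. -/
def HolderOnExt (lam θ C : ℝ) (A : NatExt r M → ℝ) : Prop :=
  ∀ p q, |A p - A q| ≤ C * (dHat lam p q) ^ θ

/-- `(Σ,σ)` is (topologically) transitive. -/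
def TransitiveShift (r : ℕ) (M : Fin r → Fin r → Bool) : Prop :=
  ∀ U V : Set (SigSp r M), IsOpen U → IsOpen V → U.Nonempty → V.Nonempty →
    ∃ n : ℕ, (shiftS^[n] '' U ∩ V).Nonempty

/-- `(Σ,σ)` is topologically mixing. -/
def MixingShift (r : ℕ) (M : Fin r → Fin r → Bool) : Prop :=
  ∀ U V : Set (SigSp r M), IsOpen U → IsOpen V → U.Nonempty → V.Nonempty →
    ∃ K : ℕ, ∀ k > K, (shiftS^[k] '' U ∩ V).Nonempty

/-- A chain of length `k` starting at `x`: `x⁰ = x`, `x^{j+1} = τ_{yʲ}(xʲ)`. -/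
def IsChainFrom (x : SigSp r M) (k : ℕ) (p : ℕ → NatExt r M) : Prop :=
  (1 ≤ k → proj1 (p 0) = x) ∧ ∀ j, j + 1 < k → proj1 (p (j + 1)) = tau (p j)

/-- A path in `P(x, x̄, ε)`: begins at `x̄`, ends within `ε` of `x`. -/
def InPath (lam ε : ℝ) (x xbar : SigSp r M) (k : ℕ) (p : ℕ → NatExt r M) : Prop :=
  1 ≤ k ∧ proj1 (p 0) = xbar ∧ (∀ j, j + 1 < k → proj1 (p (j + 1)) = tau (p j)) ∧
    dS lam (tau (p (k - 1))) x < ε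

/-- `S_A^ε(x, x̄)`. -/
noncomputable def SAeps (lam : ℝ) (A : NatExt r M → ℝ) (ε : ℝ) (x xbar : SigSp r M) : EReal :=
  sInf {v : EReal | ∃ k p, InPath lam ε x xbar k p ∧
    v = ((- ∑ j ∈ Finset.range k, (A (p j) - betaA A) : ℝ) : EReal)}

/-- The Mañé potential `S_A(x, x̄) = lim_{ε→0} S_A^ε(x, x̄)`. -/
noncomputable def ManePot (lam : ℝ) (A : NatExt r M → ℝ) (x xbar : SigSp r M) : EReal :=
  ⨆ (ε : ℝ) (_ : 0 < ε), SAeps lam A ε x xbar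

/-- `x` is non-wandering with respect to `A`. -/
def NonWand (lam : ℝ) (A : NatExt r M → ℝ) (x : SigSp r M) : Prop :=
  ∀ ε > 0, ∃ k p, InPath lam ε x x k p ∧
    |∑ j ∈ Finset.range k, (A (p j) - betaA A)| < ε

/-- `x` is `u`-connected to `x̄`. -/
def UConnected (lam : ℝ) (A : NatExt r M → ℝ) (u : SigSp r M → ℝ)
    (x xbar : SigSp r M) : Prop :=
  ∀ ε > 0, ∃ k p, InPath lam ε x xbar k p ∧
    |∑ j ∈ Finset.range k, (A (p j) - betaA A) - (u x - u xbar)| < ε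

/-- A (continuous) sub-action for `A`. -/
def SubAction (A : NatExt r M → ℝ) (u : SigSp r M → ℝ) : Prop :=
  Continuous u ∧ ∀ p : NatExt r M, u (proj1 p) ≤ u (tau p) - A p + betaA A

/-- A calibrated sub-action for `A`:
`u(x) = min_{y ∈ Σ*_x} [u(τ_y(x)) − A(y,x) + β_A]`. -/
def Calibrated (A : NatExt r M → ℝ) (u : SigSp r M → ℝ) : Prop :=
  Continuous u ∧ ∀ x : SigSp r M,
    IsLeast {v : ℝ | ∃ p : NatExt r M, proj1 p = x ∧ v = u (tau p) - A p + betaA A} (u x)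

/-- The candidate maximal sub-action `u_A` (for `β_A = 0`). -/
noncomputable def uMax (A : NatExt r M → ℝ) (x : SigSp r M) : ℝ :=
  sInf {v : ℝ | ∃ k p, IsChainFrom x k p ∧ v = -∑ j ∈ Finset.range k, A (p j)}

/-- The operator `L_ρ(f)(x) = ρ · min_{y ∈ Σ*_x} [f(τ_y(x)) − A(y,x)]`. -/
noncomputable def Lrho (A : NatExt r M → ℝ) (rho : ℝ) (f : SigSp r M → ℝ)
    (x : SigSp r M) : ℝ :=
  rho * sInf {v : ℝ | ∃ p : NatExt r M, proj1 p = x ∧ v = f (tau p) - A p}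

end AubryMather

/-- The (topological) support of a measure. -/
def msupport {X : Type*} [TopologicalSpace X] [MeasurableSpace X]
    (μ : MeasureTheory.Measure X) : Set X :=
  {p | ∀ U : Set X, IsOpen U → p ∈ U → 0 < μ U}



section SupportAux

variable {r : ℕ} {M : Fin r → Fin r → Bool}

private lemma isClosed_sig : IsClosed {x : ℕ → Fin r | ∀ j, M (x j) (x (j + 1)) = true} := by
  have : {x : ℕ → Fin r | ∀ j, M (x j) (x (j + 1)) = true}
      = ⋂ j, {x : ℕ → Fin r | M (x j) (x (j + 1)) = true} := by
    ext x; simp [Set.mem_iInter]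
  rw [this]
  refine isClosed_iInter fun j => ?_
  have hc : Continuous ((fun p : Fin r × Fin r => M p.1 p.2) ∘
      (fun x : ℕ → Fin r => (x j, x (j + 1)))) :=
    continuous_of_discreteTopology.comp
      ((continuous_apply j).prodMk (continuous_apply (j + 1)))
  exact IsClosed.preimage hc (isClosed_discrete {true})

private lemma isClosed_dual : IsClosed {y : ℕ → Fin r | ∀ j, M (y (j + 1)) (y j) = true} := by
  have : {y : ℕ → Fin r | ∀ j, M (y (j + 1)) (y j) = true}
      = ⋂ j, {y : ℕ → Fin r | M (y (j + 1)) (y j) = true} := by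
    ext y; simp [Set.mem_iInter]
  rw [this]
  refine isClosed_iInter fun j => ?_
  have hc : Continuous ((fun p : Fin r × Fin r => M p.1 p.2) ∘
      (fun y : ℕ → Fin r => (y (j + 1), y j))) :=
    continuous_of_discreteTopology.comp
      ((continuous_apply (j + 1)).prodMk (continuous_apply j))
  exact IsClosed.preimage hc (isClosed_discrete {true})

instance : CompactSpace (SigSp r M) :=
  isCompact_iff_compactSpace.mp isClosed_sig.isCompact

instance : CompactSpace (DualSp r M) :=
  isCompact_iff_compactSpace.mp isClosed_dual.isCompact

instance : CompactSpace (NatExt r M) := by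
  have h : IsClosed {p : DualSp r M × SigSp r M | M (p.1.1 0) (p.2.1 0) = true} := by
    have hc : Continuous ((fun q : Fin r × Fin r => M q.1 q.2) ∘
        (fun p : DualSp r M × SigSp r M => (p.1.1 0, p.2.1 0))) :=
      continuous_of_discreteTopology.comp
        (((continuous_apply 0).comp (continuous_subtype_val.comp continuous_fst)).prodMk
          ((continuous_apply 0).comp (continuous_subtype_val.comp continuous_snd)))
    exact IsClosed.preimage hc (isClosed_discrete {true})
  exact isCompact_iff_compactSpace.mp h.isCompact

instance : SecondCountableTopology (SigSp r M) :=
  inferInstanceAs (SecondCountableTopology {x : ℕ → Fin r | ∀ j, M (x j) (x (j + 1)) = true})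

instance : SecondCountableTopology (DualSp r M) :=
  inferInstanceAs (SecondCountableTopology {y : ℕ → Fin r | ∀ j, M (y (j + 1)) (y j) = true})

instance : SecondCountableTopology (NatExt r M) :=
  inferInstanceAs (SecondCountableTopology
    {p : DualSp r M × SigSp r M | M (p.1.1 0) (p.2.1 0) = true})

instance : BorelSpace (SigSp r M) :=
  inferInstanceAs (BorelSpace {x : ℕ → Fin r | ∀ j, M (x j) (x (j + 1)) = true})

instance : BorelSpace (DualSp r M) :=
  inferInstanceAs (BorelSpace {y : ℕ → Fin r | ∀ j, M (y (j + 1)) (y j) = true})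

instance : BorelSpace (NatExt r M) :=
  inferInstanceAs (BorelSpace {p : DualSp r M × SigSp r M | M (p.1.1 0) (p.2.1 0) = true})

private lemma continuous_proj1 : Continuous (proj1 (r := r) (M := M)) :=
  continuous_snd.comp continuous_subtype_val

private lemma continuous_tau : Continuous (tau (r := r) (M := M)) := by
  refine Continuous.subtype_mk ?_ _
  refine continuous_pi fun n => ?_
  cases n with
  | zero =>
      exact (continuous_apply 0).comp
        (continuous_subtype_val.comp (continuous_fst.comp continuous_subtype_val))
  | succ m =>
      exact (continuous_apply m).comp
        (continuous_subtype_val.comp (continuous_snd.comp continuous_subtype_val))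

/-- The complement of the support is null (second countable space). -/
private lemma measure_compl_msupport {X : Type*} [TopologicalSpace X] [MeasurableSpace X]
    [SecondCountableTopology X] (μ : Measure X) : μ (msupport μ)ᶜ = 0 := by
  set S : Set (Set X) := {U | IsOpen U ∧ μ U = 0} with hS
  obtain ⟨T, hTc, hTS, hTU⟩ := TopologicalSpace.isOpen_sUnion_countable S fun s hs => hs.1
  have hsub : (msupport μ)ᶜ ⊆ ⋃₀ S := by
    intro p hp
    simp only [msupport, Set.mem_compl_iff, Set.mem_setOf_eq, not_forall] at hp
    obtain ⟨U, hUo, hpU, hU0⟩ := hp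
    exact ⟨U, ⟨hUo, le_antisymm (not_lt.mp hU0) bot_le⟩, hpU⟩
  have : μ (⋃₀ S) = 0 := by
    rw [← hTU]
    exact (measure_sUnion_null_iff hTc).mpr fun s hs => (hTS hs).2
  exact measure_mono_null hsub this

end SupportAux

/-- a holonomic probability is `A`-maximizing iff its support lies in the
contact locus `M_A(u)` of any sub-action `u`. -/
theorem maximizing_iff_support
    {r : ℕ} {M : Fin r → Fin r → Bool}
    (A : NatExt r M → ℝ) (hA : Continuous A)
    (u : SigSp r M → ℝ) (hu : SubAction A u)
    (μ : Measure (NatExt r M)) (hμ : Holonomic μ) :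
    (∫ p, A p ∂μ) = betaA A ↔
      msupport μ ⊆ {p : NatExt r M | A p + u (proj1 p) - u (tau p) = betaA A} := by
  obtain ⟨hu_cont, hu_sub⟩ := hu
  have hprob : IsProbabilityMeasure μ := hμ.1
  set B := betaA A with hB
  set g : NatExt r M → ℝ := fun p => u (tau p) - A p + B - u (proj1 p) with hg
  have hgc : Continuous g :=
    (((hu_cont.comp continuous_tau).sub hA).add continuous_const).sub
      (hu_cont.comp continuous_proj1)
  have hg0 : ∀ p, 0 ≤ g p := fun p => by have := hu_sub p; simp only [hg]; linarith
  have hintg : Integrable g μ :=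
    hgc.integrable_of_hasCompactSupport (HasCompactSupport.of_compactSpace _)
  have hintA : Integrable A μ :=
    hA.integrable_of_hasCompactSupport (HasCompactSupport.of_compactSpace _)
  have hintT : Integrable (fun p => u (tau p)) μ :=
    (hu_cont.comp continuous_tau).integrable_of_hasCompactSupport
      (HasCompactSupport.of_compactSpace _)
  have hintP : Integrable (fun p => u (proj1 p)) μ :=
    (hu_cont.comp continuous_proj1).integrable_of_hasCompactSupport
      (HasCompactSupport.of_compactSpace _)
  have hholo : (∫ p, u (tau p) ∂μ) = ∫ p, u (proj1 p) ∂μ := hμ.2 ⟨u, hu_cont⟩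
  have hgint : (∫ p, g p ∂μ) = B - ∫ p, A p ∂μ := by
    have hi2 : Integrable (fun p => u (tau p) - A p) μ := hintT.sub hintA
    have hi1 : Integrable (fun p => u (tau p) - A p + B) μ := hi2.add (integrable_const B)
    have h1 : (∫ p, g p ∂μ) = ∫ p, (u (tau p) - A p + B) - u (proj1 p) ∂μ := rfl
    rw [h1, integral_sub hi1 hintP, integral_add hi2 (integrable_const B),
      integral_sub hintT hintA, hholo, integral_const, probReal_univ,
      one_smul]
    ring
  have hset : {p : NatExt r M | A p + u (proj1 p) - u (tau p) = B} = {p | g p = 0} := by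
    ext p; simp only [Set.mem_setOf_eq, hg]; constructor <;> intro h <;> linarith
  rw [hset]
  constructor
  · intro hmax p hp
    simp only [Set.mem_setOf_eq]
    by_contra hne
    have hgp : 0 < g p := lt_of_le_of_ne (hg0 p) (Ne.symm hne)
    set U : Set (NatExt r M) := g ⁻¹' Set.Ioi (g p / 2) with hU
    have hUo : IsOpen U := isOpen_Ioi.preimage hgc
    have hμU : 0 < μ U := hp U hUo (by simp [hU, Set.mem_preimage]; linarith)
    have hμUr : 0 < (μ U).toReal :=
      ENNReal.toReal_pos hμU.ne' (measure_ne_top μ U)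
    have h1 : g p / 2 * (μ U).toReal ≤ ∫ x in U, g x ∂μ :=
      setIntegral_ge_of_const_le_real hUo.measurableSet (measure_ne_top μ U)
        (fun x hx => le_of_lt hx) hintg.integrableOn
    have h2 : (∫ x in U, g x ∂μ) ≤ ∫ x, g x ∂μ :=
      setIntegral_le_integral hintg (Filter.Eventually.of_forall hg0)
    have h3 : (∫ x, g x ∂μ) = 0 := by rw [hgint, hmax]; ring
    have := mul_pos (half_pos hgp) hμUr
    linarith
  · intro hsupp
    have hnull : μ {p | g p ≠ 0} = 0 := by
      refine measure_mono_null ?_ (measure_compl_msupport μ)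
      intro p hp
      simp only [Set.mem_setOf_eq] at hp
      intro hmem
      exact hp (hsupp hmem)
    have hae : g =ᵐ[μ] fun _ => 0 := by
      rw [Filter.EventuallyEq, ae_iff]
      simpa using hnull
    have : (∫ p, g p ∂μ) = 0 := by
      rw [integral_congr_ae hae, integral_zero]
    rw [hgint] at this
    linarith
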